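/- Let p be an odd prime. Then (2^(p-1) - 1)/p ≡ ∑_{j odd, 1 ≤ j < p-1} 1/j (mod p), and also (2^(p-1) - 1)/p ≡ -(1/2) · ∑_{j=1}^{(p-1)/2} 1/j (mod p). -/

import Mathlib

/-- Rational congruence: `x ≡ y (mod m)` means that `x - y`, written in lowest
terms, has numerator divisible by `m`. -/
def ratModEq (m : ℕ) (x y : ℚ) : Prop := (m : ℤ) ∣ (x - y).num

namespace FQE

/-- Auxiliary congruence: `x - y = p * a / b` with `p ∤ b`. -/
def RMod (p : ℕ) (x y : ℚ) : Prop :=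
  ∃ a b : ℤ, ¬ (p : ℤ) ∣ b ∧ (x - y) * (b : ℚ) = (p : ℚ) * (a : ℚ)

variable {p : ℕ}

lemma not_dvd_one (hp : p.Prime) : ¬ (p : ℤ) ∣ 1 := by
  intro h
  have := Int.isUnit_iff.mp (isUnit_of_dvd_one h)
  have h2 := hp.two_le
  omega

lemma rmod_of_eq (hp : p.Prime) {x y : ℚ} (h : x = y) : RMod p x y :=
  ⟨0, 1, not_dvd_one hp, by simp [h]⟩

lemma rmod_refl (hp : p.Prime) (x : ℚ) : RMod p x x := rmod_of_eq hp rfl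

lemma hpz (hp : p.Prime) : Prime (p : ℤ) := Nat.prime_iff_prime_int.mp hp

lemma rmod_add (hp : p.Prime) {x y z w : ℚ} (h1 : RMod p x y) (h2 : RMod p z w) :
    RMod p (x + z) (y + w) := by
  obtain ⟨a, b, hb, hab⟩ := h1
  obtain ⟨a', b', hb', hab'⟩ := h2
  refine ⟨a * b' + a' * b, b * b', ?_, ?_⟩
  · intro hd
    rcases ((hpz hp).dvd_mul.mp hd) with h | h
    · exact hb h
    · exact hb' h
  · push_cast
    linear_combination (b' : ℚ) * hab + (b : ℚ) * hab'

lemma rmod_neg (hp : p.Prime) {x y : ℚ} (h : RMod p x y) : RMod p (-x) (-y) := by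
  obtain ⟨a, b, hb, hab⟩ := h
  exact ⟨-a, b, hb, by push_cast; linear_combination -hab⟩

lemma rmod_sub (hp : p.Prime) {x y z w : ℚ} (h1 : RMod p x y) (h2 : RMod p z w) :
    RMod p (x - z) (y - w) := by
  have := rmod_add hp h1 (rmod_neg hp h2)
  simpa [sub_eq_add_neg] using this

lemma rmod_trans (hp : p.Prime) {x y z : ℚ} (h1 : RMod p x y) (h2 : RMod p y z) :
    RMod p x z := by
  obtain ⟨a, b, hb, hab⟩ := h1
  obtain ⟨a', b', hb', hab'⟩ := h2
  refine ⟨a * b' + a' * b, b * b', ?_, ?_⟩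
  · intro hd
    rcases ((hpz hp).dvd_mul.mp hd) with h | h
    · exact hb h
    · exact hb' h
  · push_cast
    linear_combination (b' : ℚ) * hab + (b : ℚ) * hab'

lemma rmod_cancel (hp : p.Prime) {c : ℤ} (hc : ¬ (p : ℤ) ∣ c) {x y : ℚ}
    (h : RMod p ((c : ℚ) * x) ((c : ℚ) * y)) : RMod p x y := by
  obtain ⟨a, b, hb, hab⟩ := h
  refine ⟨a, c * b, ?_, ?_⟩
  · intro hd
    rcases ((hpz hp).dvd_mul.mp hd) with h | h
    · exact hc h
    · exact hb h
  · push_cast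
    linear_combination hab

lemma rmod_sum (hp : p.Prime) {α : Type*} {s : Finset α} {f g : α → ℚ}
    (h : ∀ i ∈ s, RMod p (f i) (g i)) :
    RMod p (∑ i ∈ s, f i) (∑ i ∈ s, g i) := by
  classical
  induction s using Finset.induction with
  | empty => simpa using rmod_refl hp 0
  | insert _ _ hx ih =>
    rename_i a s
    rw [Finset.sum_insert hx, Finset.sum_insert hx]
    exact rmod_add hp (h a (Finset.mem_insert_self a s))
      (ih fun i hi => h i (Finset.mem_insert_of_mem hi))

lemma rmod_int_div (hp : p.Prime) {n m k : ℤ} (hk0 : k ≠ 0) (hk : ¬ (p : ℤ) ∣ k)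
    (h : (p : ℤ) ∣ (n - m)) : RMod p ((n : ℚ) / (k : ℚ)) ((m : ℚ) / (k : ℚ)) := by
  obtain ⟨t, ht⟩ := h
  refine ⟨t, k, hk, ?_⟩
  have hkQ : (k : ℚ) ≠ 0 := Int.cast_ne_zero.mpr hk0
  have hcast : (n : ℚ) - (m : ℚ) = (p : ℚ) * (t : ℚ) := by exact_mod_cast congrArg (Int.cast : ℤ → ℚ) ht
  field_simp
  linear_combination hcast

lemma rmod_ratModEq (hp : p.Prime) {x y : ℚ} (h : RMod p x y) : ratModEq p x y := by
  obtain ⟨a, b, hb, hab⟩ := h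
  set q : ℚ := x - y with hq
  have hden : (q.den : ℚ) ≠ 0 := by exact_mod_cast q.den_ne_zero
  have hnum : (q.num : ℚ) = q * (q.den : ℚ) := by
    rw [← div_eq_iff hden]; exact Rat.num_div_den q
  have key : (q.num : ℚ) * (b : ℚ) = ((p : ℤ) * a * (q.den : ℤ) : ℤ) := by
    push_cast
    calc (q.num : ℚ) * b = (q * (q.den : ℚ)) * b := by rw [hnum]
      _ = (q * b) * (q.den : ℚ) := by ring
      _ = ((p : ℚ) * a) * (q.den : ℚ) := by rw [hab]
      _ = (p : ℚ) * a * (q.den : ℚ) := by ring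
  have keyZ : q.num * b = (p : ℤ) * a * (q.den : ℤ) := by exact_mod_cast key
  have hdvd : (p : ℤ) ∣ q.num * b := ⟨a * q.den, by linarith [keyZ]⟩
  rcases ((hpz hp).dvd_mul.mp hdvd) with h | h
  · exact h
  · exact absurd h hb

lemma not_dvd_of_lt (hp : p.Prime) {m : ℕ} (h1 : 1 ≤ m) (h2 : m < p) :
    ¬ (p : ℤ) ∣ (m : ℤ) := by
  rw [Int.natCast_dvd_natCast]
  intro hd
  exact absurd (Nat.le_of_dvd h1 hd) (not_le.mpr h2)

/-- `C(p-1, k) ≡ (-1)^k (mod p)` for `k < p`. -/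
lemma choose_cong (hp : p.Prime) : ∀ k, k < p → (p : ℤ) ∣ ((p - 1).choose k : ℤ) - (-1) ^ k := by
  intro k
  induction k with
  | zero => intro _; simp
  | succ k ih =>
    intro hk
    have hk' : k < p := by omega
    have h1 := ih hk'
    have hps : p - 1 + 1 = p := by have := hp.two_le; omega
    have hpascal : p.choose (k + 1) = (p - 1).choose k + (p - 1).choose (k + 1) := by
      conv_lhs => rw [← hps]
      exact Nat.choose_succ_succ (p - 1) k
    have hdvd : (p : ℤ) ∣ (p.choose (k + 1) : ℤ) := by
      rw [Int.natCast_dvd_natCast]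
      exact hp.dvd_choose_self (by omega) hk
    have : ((p - 1).choose (k + 1) : ℤ) - (-1) ^ (k + 1) =
        (p.choose (k + 1) : ℤ) - (((p - 1).choose k : ℤ) - (-1) ^ k) := by
      rw [hpascal]
      push_cast
      ring
    rw [this]
    exact dvd_sub hdvd h1

end FQE

open FQE Finset in
theorem fermat_quotient_eisenstein (p : ℕ) (hp : p.Prime) (hodd : Odd p) :
    ratModEq p ((2 ^ (p - 1) - 1 : ℚ) / p)
      (∑ j ∈ (Finset.Icc 1 (p - 2)).filter (fun j => Odd j), (1 : ℚ) / j) ∧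
    ratModEq p ((2 ^ (p - 1) - 1 : ℚ) / p)
      (-(1 / 2) * ∑ j ∈ Finset.Icc 1 ((p - 1) / 2), (1 : ℚ) / j) := by
  classical
  have hp2 : 2 ≤ p := hp.two_le
  have hp3 : 3 ≤ p := by
    rcases hodd with ⟨m, hm⟩
    have := hp.two_le
    omega
  have hpQ : (p : ℚ) ≠ 0 := by positivity
  have hpodd2 : p % 2 = 1 := Nat.odd_iff.mp hodd
  set q : ℚ := (2 ^ (p - 1) - 1 : ℚ) / p with hq
  set T : ℚ := ∑ j ∈ (Finset.Icc 1 (p - 2)).filter (fun j => Odd j), (1 : ℚ) / j with hT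
  set U : ℚ := ∑ j ∈ Finset.Icc 1 ((p - 1) / 2), (1 : ℚ) / j with hU
  set H : ℚ := ∑ k ∈ Finset.Icc 1 (p - 1), (1 : ℚ) / k with hH
  set S1 : ℚ := ∑ k ∈ Finset.Icc 1 (p - 1), ((-1 : ℚ)) ^ (k - 1) / k with hS1
  set A : ℚ := ∑ k ∈ Finset.Icc 1 (p - 1), (p.choose k : ℚ) / p with hA
  set E : ℚ := ∑ k ∈ (Finset.Icc 1 (p - 1)).filter (fun k => ¬ Odd k), (1 : ℚ) / k with hE
  -- coprimality of elements of Icc 1 (p-1)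
  have hndvd : ∀ k ∈ Finset.Icc 1 (p - 1), ¬ (p : ℤ) ∣ (k : ℤ) := by
    intro k hk
    rw [Finset.mem_Icc] at hk
    exact not_dvd_of_lt hp hk.1 (by omega)
  -- (I) : 2 * q = A
  have e1 : 2 * q = A := by
    have hrange : ∑ k ∈ Finset.range (p + 1), (p.choose k : ℚ) = 2 ^ p := by
      have := Nat.sum_range_choose p
      calc ∑ k ∈ Finset.range (p + 1), (p.choose k : ℚ)
          = ((∑ k ∈ Finset.range (p + 1), p.choose k : ℕ) : ℚ) := by push_cast; ring
        _ = ((2 ^ p : ℕ) : ℚ) := by rw [this]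
        _ = 2 ^ p := by push_cast; ring
    have hset : Finset.range (p + 1) = insert 0 (insert p (Finset.Icc 1 (p - 1))) := by
      ext a
      simp only [Finset.mem_range, Finset.mem_insert, Finset.mem_Icc]
      omega
    have h0 : (0 : ℕ) ∉ insert p (Finset.Icc 1 (p - 1)) := by
      simp only [Finset.mem_insert, Finset.mem_Icc]
      omega
    have hpnot : p ∉ Finset.Icc 1 (p - 1) := by
      simp only [Finset.mem_Icc]
      omega
    have hsum : ∑ k ∈ Finset.Icc 1 (p - 1), (p.choose k : ℚ) = 2 ^ p - 2 := by
      have := hrange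
      rw [hset, Finset.sum_insert h0, Finset.sum_insert hpnot] at this
      simp only [Nat.choose_zero_right, Nat.choose_self, Nat.cast_one] at this
      linarith
    have hApow : A = (2 ^ p - 2) / p := by
      rw [hA, ← Finset.sum_div, hsum]
    rw [hApow, hq]
    have hpow : (2 : ℚ) ^ p = 2 ^ (p - 1) * 2 := by
      rw [← pow_succ]
      congr 1
      omega
    field_simp
    linarith [hpow]
  -- (C1) : RMod p A S1
  have c1 : RMod p A S1 := by
    rw [hA, hS1]
    apply rmod_sum hp
    intro k hk
    have hk' := Finset.mem_Icc.mp hk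
    have hk1 : 1 ≤ k := hk'.1
    have hkp : k < p := by omega
    -- exact identity: C(p,k)/p = C(p-1,k-1)/k
    have hid : (p.choose k : ℚ) / p = (((p - 1).choose (k - 1) : ℤ) : ℚ) / (k : ℤ) := by
      have hnat : p * (p - 1).choose (k - 1) = p.choose k * k := by
        have := Nat.add_one_mul_choose_eq (p - 1) (k - 1)
        have h1 : p - 1 + 1 = p := by omega
        have h2 : k - 1 + 1 = k := by omega
        rw [h1, h2] at this
        linarith [this]
      have hkQ : (k : ℚ) ≠ 0 := by positivity
      have hcast : (p : ℚ) * ((p - 1).choose (k - 1) : ℚ) = (p.choose k : ℚ) * k := by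
        exact_mod_cast congrArg (Nat.cast : ℕ → ℚ) hnat
      push_cast
      field_simp
      linarith [hcast]
    rw [hid]
    have hneg : ((-1 : ℚ)) ^ (k - 1) / (k : ℚ) = (((-1) ^ (k - 1) : ℤ) : ℚ) / ((k : ℤ) : ℚ) := by
      push_cast
      ring
    rw [hneg]
    apply rmod_int_div hp
    · exact_mod_cast (by omega : (k : ℤ) ≠ 0)
    · exact hndvd k hk
    · exact choose_cong hp (k - 1) (by omega)
  -- filter equality: odd part of Icc 1 (p-1) = odd part of Icc 1 (p-2)
  have hfilter : (Finset.Icc 1 (p - 1)).filter (fun j => Odd j)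
      = (Finset.Icc 1 (p - 2)).filter (fun j => Odd j) := by
    ext a
    simp only [Finset.mem_filter, Finset.mem_Icc, Nat.odd_iff]
    omega
  -- (II) : S1 + H = 2 * T
  have e2 : S1 + H = 2 * T := by
    rw [hS1, hH, ← Finset.sum_add_distrib]
    have hterm : ∀ k ∈ Finset.Icc 1 (p - 1),
        ((-1 : ℚ)) ^ (k - 1) / k + 1 / k = if Odd k then 2 / (k : ℚ) else 0 := by
      intro k hk
      have hk' := Finset.mem_Icc.mp hk
      rcases Nat.even_or_odd k with he | ho
      · have hko : Odd (k - 1) := Nat.Even.sub_odd hk'.1 he (by norm_num)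
        rw [hko.neg_one_pow]
        have : ¬ Odd k := by simp [Nat.odd_iff, Nat.even_iff.mp he]
        rw [if_neg this]
        ring
      · have hke : Even (k - 1) := Nat.Odd.sub_odd ho (by norm_num)
        rw [hke.neg_one_pow]
        rw [if_pos ho]
        ring
    rw [Finset.sum_congr rfl hterm, ← Finset.sum_filter]
    rw [hfilter, hT, Finset.mul_sum]
    apply Finset.sum_congr rfl
    intro x _
    ring
  -- (III) : U = 2 * E
  have e3 : U = 2 * E := by
    rw [hU, hE]
    rw [Finset.mul_sum]
    apply Finset.sum_nbij' (i := fun j => 2 * j) (j := fun k => k / 2)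
    · intro a ha
      simp only [Finset.mem_Icc] at ha
      simp only [Finset.mem_filter, Finset.mem_Icc, Nat.odd_iff]
      omega
    · intro a ha
      simp only [Finset.mem_filter, Finset.mem_Icc, Nat.odd_iff] at ha
      simp only [Finset.mem_Icc]
      omega
    · intro a ha
      omega
    · intro a ha
      simp only [Finset.mem_filter, Finset.mem_Icc, Nat.odd_iff] at ha
      omega
    · intro a ha
      simp only [Finset.mem_Icc] at ha
      have haQ : (a : ℚ) ≠ 0 := by
        have : (1 : ℕ) ≤ a := ha.1
        positivity
      push_cast
      field_simp
  -- H = T + E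
  have e4 : H = T + E := by
    rw [hH, hT, hE, ← hfilter]
    rw [← Finset.sum_filter_add_sum_filter_not (Finset.Icc 1 (p - 1)) (fun j => Odd j)]
  -- (C2) : RMod p H 0
  have c2 : RMod p H 0 := by
    have hrev : H = ∑ k ∈ Finset.Icc 1 (p - 1), (1 : ℚ) / ((p - k : ℕ) : ℚ) := by
      rw [hH]
      apply Finset.sum_nbij' (i := fun k => p - k) (j := fun k => p - k)
      · intro a ha
        simp only [Finset.mem_Icc] at ha ⊢
        omega
      · intro a ha
        simp only [Finset.mem_Icc] at ha ⊢
        omega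
      · intro a ha
        simp only [Finset.mem_Icc] at ha
        omega
      · intro a ha
        simp only [Finset.mem_Icc] at ha
        omega
      · intro a ha
        simp only [Finset.mem_Icc] at ha
        congr 2
        omega
    have h2H : RMod p (H + H) (0 + 0) := by
      nth_rewrite 2 [hrev]
      rw [hH, ← Finset.sum_add_distrib]
      have : (0 : ℚ) + 0 = ∑ k ∈ Finset.Icc 1 (p - 1), (0 : ℚ) := by simp
      rw [this]
      apply rmod_sum hp
      intro k hk
      have hk' := Finset.mem_Icc.mp hk
      have hkQ : (k : ℚ) ≠ 0 := by
        have : (1 : ℕ) ≤ k := hk'.1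
        positivity
      have hpkQ : ((p - k : ℕ) : ℚ) ≠ 0 := by
        have h1 : (1 : ℕ) ≤ p - k := by omega
        positivity
      refine ⟨1, (k : ℤ) * ((p - k : ℕ) : ℤ), ?_, ?_⟩
      · intro hd
        rcases ((hpz hp).dvd_mul.mp hd) with h | h
        · exact hndvd k hk h
        · refine not_dvd_of_lt hp (m := p - k) (by omega) (by omega) h
      · have hcast : ((p - k : ℕ) : ℚ) = (p : ℚ) - (k : ℚ) := by
          push_cast [Nat.cast_sub (by omega : k ≤ p)]
          ring
        have hpk : (p : ℚ) - (k : ℚ) ≠ 0 := hcast ▸ hpkQ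
        push_cast
        rw [hcast]
        field_simp [hkQ, hpk]
        ring
    have : RMod p (2 * H) (2 * 0) := by
      have h1 : H + H = 2 * H := by ring
      have h2 : (0 : ℚ) + 0 = 2 * 0 := by ring
      rwa [h1, h2] at h2H
    exact rmod_cancel hp (c := 2) (fun hd => by
      have h := Int.le_of_dvd (by norm_num) hd
      omega) (by exact_mod_cast this)
  -- assemble claim 1 : RMod p q T
  have claim1 : RMod p q T := by
    apply rmod_cancel hp (c := 2) (fun hd => by
      have h := Int.le_of_dvd (by norm_num) hd
      omega)
    -- RMod p (2*q) (2*T)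
    have step1 : RMod p (2 * q) S1 := by
      rw [e1]; exact c1
    have step2 : RMod p S1 (2 * T) := by
      have hS1eq : S1 = 2 * T - H := by linarith [e2]
      rw [hS1eq]
      have := rmod_sub hp (rmod_refl hp (2 * T)) c2
      simpa using this
    have : RMod p (2 * q) (2 * T) := rmod_trans hp step1 step2
    exact_mod_cast this
  -- assemble claim 2 : RMod p q (-(1/2) * U)
  have claim2 : RMod p q (-(1 / 2) * U) := by
    apply rmod_cancel hp (c := 2) (fun hd => by
      have h := Int.le_of_dvd (by norm_num) hd
      omega)
    have hS1HU : S1 = H - U := by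
      have : S1 = 2 * T - H := by linarith [e2]
      rw [this, e4, e3]
      ring
    have step1 : RMod p (2 * q) (H - U) := by
      rw [e1, ← hS1HU]; exact c1
    have step2 : RMod p (H - U) (0 - U) := rmod_sub hp c2 (rmod_refl hp U)
    have step3 : RMod p (2 * q) (0 - U) := rmod_trans hp step1 step2
    have heq : (0 : ℚ) - U = 2 * (-(1 / 2) * U) := by ring
    rw [heq] at step3
    exact_mod_cast step3
  exact ⟨rmod_ratModEq hp claim1, rmod_ratModEq hp claim2⟩
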